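/- Let S ⊆ [0, ∞) be closed with complement S* = [0, ∞) \ S open and additive, S bounded with L = sup S, and define h_S : [0, L] → ℝ by h_S(x) = 0 if x ∈ ∂S, h_S(x) = dist(x, ∂S) if x is in the interior of S, and h_S(x) = −dist(x, ∂S) if x ∈ S*. Then h_S is continuous, h_S(0) = h_S(L) = 0, and for every s ∈ S with s ≤ L there exists x ∈ [0, L − s] with h_S(x + s) = h_S(x). -/
import Mathlib


theorem hopf_theorem_II_existence (S Sstar : Set ℝ) (hSclosed : IsClosed S)
    (hSsub : S ⊆ Set.Ici 0) (hSstar : Sstar = Set.Ici (0 : ℝ) \ S)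
    (hopen : IsOpen Sstar) (hadd : ∀ p ∈ Sstar, ∀ q ∈ Sstar, p + q ∈ Sstar)
    (hne : S.Nonempty) (hbdd : BddAbove S) (L : ℝ) (hL : L = sSup S)
    (hS : ℝ → ℝ)
    (hdef_bd : ∀ x ∈ frontier S, hS x = 0)
    (hdef_int : ∀ x ∈ interior S, hS x = Metric.infDist x (frontier S))
    (hdef_star : ∀ x ∈ Sstar, hS x = -Metric.infDist x (frontier S)) :
    ContinuousOn hS (Set.Icc 0 L) ∧ hS 0 = 0 ∧ hS L = 0 ∧
      ∀ s ∈ S, s ≤ L → ∃ x ∈ Set.Icc 0 (L - s), hS (x + s) = hS x := by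
  subst hSstar
  -- 0 ∈ S
  have h0S : (0:ℝ) ∈ S := by
    by_contra h0
    obtain ⟨ε, hε, hball⟩ := Metric.isOpen_iff.mp hopen 0 ⟨Set.mem_Ici.mpr le_rfl, h0⟩
    have hmem : -(ε/2) ∈ Metric.ball (0:ℝ) ε := by
      rw [Metric.mem_ball, Real.dist_eq]
      rw [abs_of_nonpos (by linarith)]
      linarith
    have := (hball hmem).1
    simp only [Set.mem_Ici] at this
    linarith
  have hIntSub : interior S ⊆ Set.Ioi (0:ℝ) := by
    have := interior_mono hSsub
    rwa [interior_Ici] at this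
  -- 0 ∈ frontier S
  have h0F : (0:ℝ) ∈ frontier S := by
    rw [hSclosed.frontier_eq]
    exact ⟨h0S, fun h => lt_irrefl 0 (Set.mem_Ioi.mp (hIntSub h))⟩
  -- L ∈ S
  have hLS : L ∈ S := hL ▸ hSclosed.csSup_mem hne hbdd
  have hub : ∀ y ∈ S, y ≤ L := fun y hy => hL ▸ le_csSup hbdd hy
  -- L ∈ frontier S
  have hLF : L ∈ frontier S := by
    rw [hSclosed.frontier_eq]
    refine ⟨hLS, fun hI => ?_⟩
    obtain ⟨ε, hε, hball⟩ := Metric.mem_nhds_iff.mp (mem_interior_iff_mem_nhds.mp hI)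
    have hmem : L + ε/2 ∈ Metric.ball L ε := by
      rw [Metric.mem_ball, Real.dist_eq, abs_of_nonneg (by linarith)]
      linarith
    have := hub _ (hball hmem)
    linarith
  have hFS : frontier S ⊆ S := by rw [hSclosed.frontier_eq]; exact Set.diff_subset
  -- trichotomy
  have htri : ∀ y : ℝ, 0 ≤ y → y ∈ frontier S ∨ y ∈ interior S ∨ y ∈ Set.Ici (0:ℝ) \ S := by
    intro y hy
    by_cases hyS : y ∈ S
    · by_cases hyI : y ∈ interior S
      · exact Or.inr (Or.inl hyI)
      · exact Or.inl (by rw [hSclosed.frontier_eq]; exact ⟨hyS, hyI⟩)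
    · exact Or.inr (Or.inr ⟨hy, hyS⟩)
  -- |hS y| ≤ infDist
  have habs : ∀ y : ℝ, 0 ≤ y → |hS y| ≤ Metric.infDist y (frontier S) := by
    intro y hy
    rcases htri y hy with h | h | h
    · rw [hdef_bd y h]; simpa using Metric.infDist_nonneg
    · rw [hdef_int y h, abs_of_nonneg Metric.infDist_nonneg]
    · rw [hdef_star y h, abs_neg, abs_of_nonneg Metric.infDist_nonneg]
  -- continuity
  have hcont : ContinuousOn hS (Set.Icc 0 L) := by
    intro x hx
    rcases htri x hx.1 with hxF | hxI | hxS
    · -- frontier: squeeze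
      have hx0 : hS x = 0 := hdef_bd x hxF
      rw [ContinuousWithinAt, hx0]
      apply squeeze_zero_norm' (a := fun y => dist y x)
      · exact Filter.eventually_of_mem self_mem_nhdsWithin (fun y hy => by
          simpa [Real.norm_eq_abs] using
            le_trans (habs y hy.1) (Metric.infDist_le_dist_of_mem hxF))
      · have : Filter.Tendsto (fun y : ℝ => dist y x) (nhds x) (nhds (dist x x)) :=
          ((continuous_id.dist continuous_const).tendsto x)
        rw [dist_self] at this
        exact tendsto_nhdsWithin_of_tendsto_nhds this
    · refine ContinuousAt.continuousWithinAt ?_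
      refine ((Metric.continuous_infDist_pt (frontier S)).continuousAt).congr ?_
      exact Filter.eventuallyEq_of_mem (isOpen_interior.mem_nhds hxI)
        (fun y hy => (hdef_int y hy).symm)
    · refine ContinuousAt.continuousWithinAt ?_
      refine (((Metric.continuous_infDist_pt (frontier S)).neg).continuousAt).congr ?_
      exact Filter.eventuallyEq_of_mem (hopen.mem_nhds hxS)
        (fun y hy => (hdef_star y hy).symm)
  refine ⟨hcont, hdef_bd 0 h0F, hdef_bd L hLF, ?_⟩
  -- the chord statement
  intro s hsS hsL
  have hs0 : 0 ≤ s := hSsub hsS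
  -- hS nonneg on S
  have hpos : ∀ y ∈ S, 0 ≤ hS y := by
    intro y hy
    by_cases hyF : y ∈ frontier S
    · rw [hdef_bd y hyF]
    · have hyI : y ∈ interior S := by
        by_contra hyI
        exact hyF (by rw [hSclosed.frontier_eq]; exact ⟨hy, hyI⟩)
      rw [hdef_int y hyI]; exact Metric.infDist_nonneg
  -- least frontier point ≥ s
  set T := frontier S ∩ Set.Ici s with hT
  have hTc : IsClosed T := isClosed_frontier.inter isClosed_Ici
  have hTne : T.Nonempty := ⟨L, hLF, hsL⟩
  have hTbdd : BddBelow T := ⟨s, fun t ht => ht.2⟩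
  have hbT : sInf T ∈ T := hTc.csInf_mem hTne hTbdd
  set b := sInf T with hbdef
  have hbF : b ∈ frontier S := hbT.1
  have hbs : s ≤ b := hbT.2
  have hbL : b ≤ L := csInf_le hTbdd ⟨hLF, hsL⟩
  -- crossing lemma
  have hcross : ∀ y : ℝ, s ≤ y → y ∉ S → ∃ f ∈ frontier S, s ≤ f ∧ f ≤ y := by
    intro y hsy hyS
    have hAne : (S ∩ Set.Icc s y).Nonempty := ⟨s, hsS, le_refl s, hsy⟩
    have hAbdd : BddAbove (S ∩ Set.Icc s y) := ⟨y, fun t ht => ht.2.2⟩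
    have hAclosed : IsClosed (S ∩ Set.Icc s y) := hSclosed.inter isClosed_Icc
    have hm := hAclosed.csSup_mem hAne hAbdd
    set m := sSup (S ∩ Set.Icc s y) with hmdef
    refine ⟨m, ?_, hm.2.1, hm.2.2⟩
    rw [hSclosed.frontier_eq]
    refine ⟨hm.1, fun hmI => ?_⟩
    have hmy : m < y := lt_of_le_of_ne hm.2.2 (fun h => hyS (h ▸ hm.1))
    obtain ⟨ε, hε, hball⟩ := Metric.mem_nhds_iff.mp (mem_interior_iff_mem_nhds.mp hmI)
    set t := min (m + ε/2) ((m+y)/2) with htdef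
    have htm : m < t := lt_min (by linarith) (by linarith)
    have hty : t ≤ y := le_trans (min_le_right _ _) (by linarith)
    have htS : t ∈ S := hball (by
      rw [Metric.mem_ball, Real.dist_eq, abs_of_nonneg (by linarith)]
      have : t ≤ m + ε/2 := min_le_left _ _
      linarith)
    have : t ≤ m := le_csSup hAbdd ⟨htS, le_trans hm.2.1 htm.le, hty⟩
    linarith
  -- [s, b] ⊆ S
  have hIcc : Set.Icc s b ⊆ S := by
    intro y hy
    by_contra hyS
    obtain ⟨f, hfF, hfs, hfy⟩ := hcross y hy.1 hyS
    have hbf : b ≤ f := csInf_le hTbdd ⟨hfF, hfs⟩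
    have : y = b := le_antisymm hy.2 (hbf.trans hfy)
    exact hyS (this ▸ hFS hbF)
  -- β := b - s ∈ S
  have hβ : b - s ∈ S := by
    by_contra hβS
    have hβstar : b - s ∈ Set.Ici (0:ℝ) \ S := ⟨by simp; linarith, hβS⟩
    have hβpos : 0 < b - s := by
      rcases eq_or_lt_of_le (show (0:ℝ) ≤ b - s by linarith) with h | h
      · exact absurd (h ▸ h0S) hβS
      · exact h
    set β := b - s with hβdef
    have hn : ∀ n : ℕ, 1 ≤ n → (n:ℝ) * β ∈ Set.Ici (0:ℝ) \ S := by
      intro n hn1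
      induction n, hn1 using Nat.le_induction with
      | base => simpa using hβstar
      | succ n hn ih =>
        have := hadd _ ih _ hβstar
        have heq : ((n:ℝ) + 1) * β = (n:ℝ) * β + β := by ring
        rw [Nat.cast_add, Nat.cast_one, heq]
        exact this
    set n := ⌊s / β⌋₊ + 1 with hndef
    have h1 : s < (n:ℝ) * β := by
      have h := Nat.lt_floor_add_one (s / β)
      rw [div_lt_iff₀ hβpos] at h
      rw [hndef]
      push_cast
      linarith
    have h2 : (n:ℝ) * β ≤ s + β := by
      have h := Nat.floor_le (div_nonneg hs0 hβpos.le)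
      rw [le_div_iff₀ hβpos] at h
      rw [hndef]
      push_cast
      nlinarith
    have hmem : (n:ℝ) * β ∈ S := hIcc ⟨h1.le, by rw [hβdef] at h2 ⊢; linarith⟩
    exact (hn n (Nat.le_add_left 1 _)).2 hmem
  -- IVT
  have hβL : b - s ≤ L - s := by linarith
  have hβ0 : 0 ≤ b - s := by linarith
  have hconts : ContinuousOn (fun x => hS (x + s) - hS x) (Set.Icc 0 (b - s)) := by
    apply ContinuousOn.sub
    · refine hcont.comp ((continuous_id.add continuous_const).continuousOn) ?_
      intro x hx
      exact ⟨by simp; linarith [hx.1], by simp; linarith [hx.2]⟩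
    · exact hcont.mono (fun x hx => ⟨hx.1, hx.2.trans (by linarith)⟩)
  have key := intermediate_value_Icc' hβ0 hconts
  have hbsb : b - s + s = b := by ring
  have h0mem : (0:ℝ) ∈ Set.Icc (hS (b - s + s) - hS (b - s)) (hS (0 + s) - hS 0) := by
    constructor
    · rw [hbsb, hdef_bd b hbF]
      have := hpos _ hβ
      linarith
    · rw [zero_add, hdef_bd 0 h0F]
      have := hpos _ hsS
      linarith
  obtain ⟨x, hxmem, hxeq⟩ := key h0mem
  refine ⟨x, ⟨hxmem.1, hxmem.2.trans hβL⟩, ?_⟩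
  have h := hxeq
  simp only at h
  linarith
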